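/- For every integrable real-valued measurable function g of (Y, V), E[(R/π(V)) · g(Y, V) | σ(V)] = E[g(Y, V) | σ(V)] P-a.s., and consequently E[(R/π(V)) · g(Y, V)] = E[g(Y, V)]. -/

import Mathlib

open MeasureTheory ProbabilityTheory

/-- For every integrable real-valued measurable function `g` of `(Y, V)`,
`E[(R/π(V)) ⬝ g(Y, V) | σ(V)] = E[g(Y, V) | σ(V)]` almost surely, and consequently
`E[(R/π(V)) ⬝ g(Y, V)] = E[g(Y, V)]`. -/
theorem ipw_conditional_unbiasedness
    {Ω : Type*} {mΩ : MeasurableSpace Ω} [StandardBorelSpace Ω] [Nonempty Ω]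
    {P : Measure Ω} [IsProbabilityMeasure P]
    {𝒱 𝓛 𝒴 : Type*} [m𝒱 : MeasurableSpace 𝒱] [m𝓛 : MeasurableSpace 𝓛]
    [m𝒴 : MeasurableSpace 𝒴]
    (V : Ω → 𝒱) (L : Ω → 𝓛) (Y : Ω → 𝒴)
    (hV : Measurable V) (hL : Measurable L) (hY : Measurable Y)
    (R : Ω → ℝ) (hR : Measurable R) (hR01 : ∀ ω, R ω = 0 ∨ R ω = 1)
    (π : 𝒱 → ℝ) (hπ : Measurable π)
    -- `π(V)` is a version of `E[R | σ(V)]`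
    (hπV : P[R | MeasurableSpace.comap V m𝒱] =ᵐ[P] fun ω => π (V ω))
    -- positivity
    (δ : ℝ) (hδ0 : 0 < δ) (hδhalf : δ < 1 / 2)
    (hpos : ∀ᵐ ω ∂P, δ ≤ π (V ω) ∧ π (V ω) ≤ 1 - δ)
    -- ignorability: `R ⟂ (Y, L) | σ(V)`
    (hign : CondIndepFun (MeasurableSpace.comap V m𝒱) (hV.comap_le) R
      (fun ω => (Y ω, L ω)) P)
    (g : 𝒴 × 𝒱 → ℝ) (hg : Measurable g)
    (hgint : Integrable (fun ω => g (Y ω, V ω)) P) :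
    (P[fun ω => (R ω / π (V ω)) * g (Y ω, V ω) | MeasurableSpace.comap V m𝒱]
        =ᵐ[P] P[fun ω => g (Y ω, V ω) | MeasurableSpace.comap V m𝒱]) ∧
      ∫ ω, (R ω / π (V ω)) * g (Y ω, V ω) ∂P = ∫ ω, g (Y ω, V ω) ∂P := by
  classical
  set m : MeasurableSpace Ω := MeasurableSpace.comap V m𝒱 with hm_def
  have hm : m ≤ mΩ := hV.comap_le
  set W' : Ω → 𝒴 × 𝓛 := fun ω => (Y ω, L ω) with hW'_def
  have hW'm : Measurable[mΩ] W' := hY.prodMk hL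
  set W₀ : Ω → (𝒴 × 𝓛) × 𝒱 := fun ω => (W' ω, V ω) with hW₀_def
  have hW₀ : Measurable[mΩ] W₀ := hW'm.prodMk hV
  set N : MeasurableSpace Ω := MeasurableSpace.comap W₀ Prod.instMeasurableSpace with hN_def
  have hNle : N ≤ mΩ := hW₀.comap_le
  letI : MeasurableSpace Ω := mΩ
  have hmN : m ≤ N := by
    rintro s ⟨u, hu, rfl⟩
    refine ⟨Set.univ ×ˢ u, MeasurableSet.univ.prod hu, ?_⟩
    ext ω; simp [W₀]
  -- the set A and its indicator
  set A : Set Ω := R ⁻¹' {1} with hA_def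
  have hA : MeasurableSet[mΩ] A := hR (measurableSet_singleton 1)
  set fA : Ω → ℝ := A.indicator (fun _ => (1 : ℝ)) with hfA_def
  have hRA : R = fA := by
    funext ω
    rcases hR01 ω with h0 | h1
    · have hω : ω ∉ A := by simp [hA_def, h0]
      simp [hfA_def, Set.indicator_of_notMem hω, h0]
    · have hω : ω ∈ A := by simp [hA_def, h1]
      simp [hfA_def, Set.indicator_of_mem hω, h1]
  have hfAint : Integrable fA P := (integrable_const (1 : ℝ)).indicator hA
  set φ : Ω → ℝ := P[fA | m] with hφ_def
  have hφsm : StronglyMeasurable[m] φ := stronglyMeasurable_condExp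
  have hφmeas : Measurable[mΩ] φ := (hφsm.mono hm).measurable
  have hφint : Integrable φ P := integrable_condExp
  have hφnn : 0 ≤ᵐ[P] φ :=
    condExp_nonneg (Filter.Eventually.of_forall fun ω =>
      Set.indicator_nonneg (fun _ _ => zero_le_one) ω)
  have hφle1 : ∀ᵐ ω ∂P, φ ω ≤ 1 := by
    have h1 : P[(fun _ => (1 : ℝ)) | m] = fun _ => (1 : ℝ) := condExp_const hm 1
    have h2 : fA ≤ᵐ[P] fun _ => (1 : ℝ) := by
      refine Filter.Eventually.of_forall fun ω => ?_
      by_cases hω : ω ∈ A <;> simp [hfA_def, hω]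
    have := condExp_mono (μ := P) (m := m) hfAint (integrable_const 1) h2
    rw [h1] at this
    exact this
  have hφV : φ =ᵐ[P] fun ω => π (V ω) := by
    have : P[R | m] = φ := by rw [hRA]
    rw [← this]; exact hπV
  -- conditional independence on rectangles
  have hmul := (condIndepFun_iff_condExp_inter_preimage_eq_mul (μ := P) hR hW'm).mp hign
  -- rectangle set-integral identity
  have hrect : ∀ t u, MeasurableSet t → MeasurableSet u →
      ∫ x in W' ⁻¹' t ∩ V ⁻¹' u, fA x ∂P = ∫ x in W' ⁻¹' t ∩ V ⁻¹' u, φ x ∂P := by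
    intro t u ht hu
    set B : Set Ω := W' ⁻¹' t with hB_def
    have hB : MeasurableSet[mΩ] B := hW'm ht
    set s : Set Ω := V ⁻¹' u with hs_def
    have hsm : MeasurableSet[m] s := ⟨u, hu, rfl⟩
    have hs : MeasurableSet[mΩ] s := hm _ hsm
    set ψ : Ω → ℝ := P[B.indicator (fun _ => (1 : ℝ)) | m] with hψ_def
    have hψint : Integrable (B.indicator fun _ => (1 : ℝ)) P := (integrable_const 1).indicator hB
    have hABint : Integrable ((A ∩ B).indicator fun _ => (1 : ℝ)) P :=
      (integrable_const 1).indicator (hA.inter hB)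
    have hmul' : P[(A ∩ B).indicator (fun _ => (1 : ℝ)) | m] =ᵐ[P] fun ω => φ ω * ψ ω := by
      exact hmul {1} t (measurableSet_singleton 1) ht
    have hφB : Integrable (fun ω => φ ω * B.indicator (fun _ => (1 : ℝ)) ω) P := by
      refine Integrable.mono' hφint.abs
        (hφint.aestronglyMeasurable.mul hψint.aestronglyMeasurable) ?_
      refine Filter.Eventually.of_forall fun ω => ?_
      by_cases hω : ω ∈ B <;> simp [hω, abs_nonneg]
    have hL1 : ∫ x in B ∩ s, fA x ∂P = ∫ x in s, ((A ∩ B).indicator fun _ => (1 : ℝ)) x ∂P := by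
      rw [Set.inter_comm B s, ← setIntegral_indicator hB]
      have : B.indicator fA = (A ∩ B).indicator fun _ => (1 : ℝ) := by
        rw [hfA_def, Set.indicator_indicator, Set.inter_comm]
      rw [this]
    have hL2 : ∫ x in s, ((A ∩ B).indicator fun _ => (1 : ℝ)) x ∂P
        = ∫ x in s, φ x * ψ x ∂P := by
      rw [← setIntegral_condExp hm hABint hsm]
      exact setIntegral_congr_ae hs (hmul'.mono fun x hx _ => hx)
    have hR1 : ∫ x in B ∩ s, φ x ∂P
        = ∫ x in s, φ x * B.indicator (fun _ => (1 : ℝ)) x ∂P := by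
      rw [Set.inter_comm B s, ← setIntegral_indicator hB]
      refine integral_congr_ae (Filter.Eventually.of_forall fun x => ?_)
      by_cases hx : x ∈ B <;> simp [hx]
    have hmulφB : P[fun ω => φ ω * B.indicator (fun _ => (1 : ℝ)) ω | m]
        =ᵐ[P] fun ω => φ ω * ψ ω := by
      exact condExp_mul_of_stronglyMeasurable_left hφsm hφB hψint
    have hR2 : ∫ x in s, φ x * B.indicator (fun _ => (1 : ℝ)) x ∂P
        = ∫ x in s, φ x * ψ x ∂P := by
      rw [← setIntegral_condExp hm hφB hsm]
      exact setIntegral_congr_ae hs (hmulφB.mono fun x hx _ => hx)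
    rw [hL1, hL2, hR1, hR2]
  -- the two measures
  set ν₁ : Measure Ω := P.restrict A with hν₁_def
  set ν₂ : Measure Ω := P.withDensity (fun ω => ENNReal.ofReal (φ ω)) with hν₂_def
  have hν₂fin : IsFiniteMeasure ν₂ := isFiniteMeasure_withDensity_ofReal hφint.2
  have hrectμ : ∀ t u, MeasurableSet t → MeasurableSet u →
      ν₁ (W' ⁻¹' t ∩ V ⁻¹' u) = ν₂ (W' ⁻¹' t ∩ V ⁻¹' u) := by
    intro t u ht hu
    have hS : MeasurableSet[mΩ] (W' ⁻¹' t ∩ V ⁻¹' u) := (hW'm ht).inter (hV hu)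
    rw [hν₁_def, Measure.restrict_apply hS, hν₂_def, withDensity_apply _ hS,
      ← ofReal_integral_eq_lintegral_ofReal hφint.integrableOn (ae_restrict_of_ae hφnn),
      ← hrect t u ht hu, hfA_def, setIntegral_indicator hA, setIntegral_const,
      smul_eq_mul, mul_one, measureReal_def, ENNReal.ofReal_toReal (measure_ne_top P _)]
  -- equality of trimmed measures via the π-system of rectangles
  have hprodeq : ∀ t u, W₀ ⁻¹' (t ×ˢ u) = W' ⁻¹' t ∩ V ⁻¹' u := fun t u => by
    ext ω; simp [hW₀_def, Set.mem_prod]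
  have htrim : ν₁.trim hNle = ν₂.trim hNle := by
    have huniv : ν₁.trim hNle Set.univ = ν₂.trim hNle Set.univ := by
      rw [trim_measurableSet_eq hNle MeasurableSet.univ,
        trim_measurableSet_eq hNle MeasurableSet.univ]
      have := hrectμ Set.univ Set.univ MeasurableSet.univ MeasurableSet.univ
      simpa using this
    refine ext_of_generate_finite
      (Set.preimage W₀ '' Set.image2 (· ×ˢ ·) {t : Set (𝒴 × 𝓛) | MeasurableSet t}
        {u : Set 𝒱 | MeasurableSet u}) ?_ ?_ ?_ huniv
    · rw [hN_def, ← generateFrom_prod, MeasurableSpace.comap_generateFrom]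
    · intro s hs t ht hst
      obtain ⟨rs, hrs, rfl⟩ := hs
      obtain ⟨rt, hrt, rfl⟩ := ht
      rw [← Set.preimage_inter]
      exact ⟨rs ∩ rt, isPiSystem_prod rs hrs rt hrt
        (Set.nonempty_of_nonempty_preimage (by rwa [Set.preimage_inter])), rfl⟩
    · rintro _ ⟨_, ⟨t, ht, u, hu, rfl⟩, rfl⟩
      have ht' : MeasurableSet t := ht
      have hu' : MeasurableSet u := hu
      have hmem : MeasurableSet[N] (W₀ ⁻¹' (t ×ˢ u)) := ⟨t ×ˢ u, ht'.prod hu', rfl⟩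
      rw [trim_measurableSet_eq hNle hmem, trim_measurableSet_eq hNle hmem, hprodeq]
      exact hrectμ t u ht' hu'
  -- the key transfer identity
  have hkey : ∀ Wf : Ω → ℝ, StronglyMeasurable[N] Wf →
      ∫ ω, fA ω * Wf ω ∂P = ∫ ω, φ ω * Wf ω ∂P := by
    intro Wf hWf
    have h1 : ∫ ω, fA ω * Wf ω ∂P = ∫ ω, Wf ω ∂ν₁ := by
      rw [hν₁_def, ← integral_indicator hA]
      refine integral_congr_ae (Filter.Eventually.of_forall fun ω => ?_)
      by_cases hω : ω ∈ A <;> simp [hfA_def, hω]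
    have h2 : ∫ ω, Wf ω ∂ν₁ = ∫ ω, Wf ω ∂ν₂ := by
      rw [integral_trim hNle hWf, integral_trim hNle hWf, htrim]
    have h3 : ∫ ω, Wf ω ∂ν₂ = ∫ ω, φ ω * Wf ω ∂P := by
      have hd : ν₂ = P.withDensity (fun ω => ((φ ω).toNNReal : ENNReal)) := rfl
      rw [hd, integral_withDensity_eq_integral_smul
        (f := fun ω => (φ ω).toNNReal) (by exact measurable_real_toNNReal.comp hφmeas) Wf]
      refine integral_congr_ae ?_
      filter_upwards [hφnn] with ω hω
      rw [NNReal.smul_def, Real.coe_toNNReal _ hω, smul_eq_mul]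
    rw [h1, h2, h3]
  -- the functions Z and G
  set G : Ω → ℝ := fun ω => g (Y ω, V ω) with hG_def
  set Z : Ω → ℝ := fun ω => (π (V ω))⁻¹ * g (Y ω, V ω) with hZ_def
  have hZmeas : Measurable[mΩ] Z := ((hπ.comp hV).inv).mul (hg.comp (hY.prodMk hV))
  have hVm : Measurable[m] V := fun s hs => ⟨s, hs, rfl⟩
  have hηm : Measurable[m] fun ω => (π (V ω))⁻¹ := (hπ.comp hVm).inv
  have hW₀N : Measurable[N] W₀ := fun s hs => ⟨s, hs, rfl⟩
  have hYVN : Measurable[N] fun ω => (Y ω, V ω) := by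
    have h2 : Measurable fun p : (𝒴 × 𝓛) × 𝒱 => (p.1.1, p.2) :=
      (measurable_fst.fst).prodMk measurable_snd
    exact h2.comp hW₀N
  have hZN : StronglyMeasurable[N] Z :=
    (Measurable.stronglyMeasurable
      (((hπ.comp measurable_snd).inv.mul hg).comp hYVN))
  have hZint : Integrable Z P := by
    refine Integrable.mono' (hgint.abs.const_mul δ⁻¹) hZmeas.aestronglyMeasurable ?_
    filter_upwards [hpos] with ω hω
    have h0 : (0 : ℝ) < π (V ω) := lt_of_lt_of_le hδ0 hω.1
    have hinv : (π (V ω))⁻¹ ≤ δ⁻¹ := by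
      exact inv_anti₀ hδ0 hω.1
    calc ‖Z ω‖ = |(π (V ω))⁻¹| * |g (Y ω, V ω)| := by
          rw [hZ_def]; exact abs_mul _ _
      _ = (π (V ω))⁻¹ * |g (Y ω, V ω)| := by rw [abs_of_nonneg (inv_nonneg.2 h0.le)]
      _ ≤ δ⁻¹ * |g (Y ω, V ω)| := by
          exact mul_le_mul_of_nonneg_right hinv (abs_nonneg _)
  have hφZint : Integrable (fun ω => φ ω * Z ω) P := by
    refine Integrable.mono' hZint.abs (hφmeas.mul hZmeas).aestronglyMeasurable ?_
    filter_upwards [hφnn, hφle1] with ω h0 h1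
    calc ‖φ ω * Z ω‖ = |φ ω| * |Z ω| := abs_mul _ _
      _ ≤ 1 * |Z ω| := by
          refine mul_le_mul_of_nonneg_right ?_ (abs_nonneg _)
          rw [abs_of_nonneg h0]; exact h1
      _ = |Z ω| := one_mul _
  have hFint : Integrable (fun ω => fA ω * Z ω) P := by
    refine Integrable.mono' hZint.abs
      (hfAint.aestronglyMeasurable.mul hZint.aestronglyMeasurable) ?_
    refine Filter.Eventually.of_forall fun ω => ?_
    by_cases hω : ω ∈ A <;> simp [hfA_def, hω, abs_nonneg]
  -- the main conditional identity
  have hce : P[fun ω => φ ω * Z ω | m] =ᵐ[P] fun ω => φ ω * (P[Z | m]) ω :=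
    condExp_mul_of_stronglyMeasurable_left hφsm hφZint hZint
  have hmain : (fun ω => φ ω * (P[Z | m]) ω) =ᵐ[P] P[fun ω => fA ω * Z ω | m] := by
    refine ae_eq_condExp_of_forall_setIntegral_eq hm hFint ?_ ?_ ?_
    · intro s hs hμs
      refine (Integrable.mono' (integrable_condExp (f := Z) (m := m) (μ := P)).abs
        ((hφmeas.mul ((stronglyMeasurable_condExp.mono hm).measurable)).aestronglyMeasurable)
        ?_).integrableOn
      filter_upwards [hφnn, hφle1] with ω h0 h1
      calc ‖φ ω * (P[Z | m]) ω‖ = |φ ω| * |(P[Z | m]) ω| := abs_mul _ _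
        _ ≤ 1 * |(P[Z | m]) ω| := by
            refine mul_le_mul_of_nonneg_right ?_ (abs_nonneg _)
            rw [abs_of_nonneg h0]; exact h1
        _ = |(P[Z | m]) ω| := one_mul _
    · intro s hs hμs
      have hsΩ : MeasurableSet[mΩ] s := hm _ hs
      have hsN : MeasurableSet[N] s := hmN _ hs
      have hindSM : StronglyMeasurable[N] (s.indicator Z) := hZN.indicator hsN
      have e1 : ∫ x in s, fA x * Z x ∂P = ∫ ω, fA ω * s.indicator Z ω ∂P := by
        rw [← integral_indicator hsΩ]
        refine integral_congr_ae (Filter.Eventually.of_forall fun ω => ?_)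
        by_cases hω : ω ∈ s <;> simp [hω]
      have e2 := hkey (s.indicator Z) hindSM
      have e3 : ∫ ω, φ ω * s.indicator Z ω ∂P = ∫ x in s, φ x * Z x ∂P := by
        rw [← integral_indicator hsΩ]
        refine integral_congr_ae (Filter.Eventually.of_forall fun ω => ?_)
        by_cases hω : ω ∈ s <;> simp [hω]
      have e4 : ∫ x in s, φ x * Z x ∂P = ∫ x in s, φ x * (P[Z | m]) x ∂P := by
        calc ∫ x in s, φ x * Z x ∂P
            = ∫ x in s, (P[fun ω => φ ω * Z ω | m]) x ∂P :=
              (setIntegral_condExp hm hφZint hs).symm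
          _ = ∫ x in s, φ x * (P[Z | m]) x ∂P :=
              setIntegral_congr_ae hsΩ (hce.mono fun x hx _ => hx)
      calc ∫ x in s, φ x * (P[Z | m]) x ∂P = ∫ x in s, φ x * Z x ∂P := e4.symm
        _ = ∫ ω, φ ω * s.indicator Z ω ∂P := e3.symm
        _ = ∫ ω, fA ω * s.indicator Z ω ∂P := e2.symm
        _ = ∫ x in s, fA x * Z x ∂P := e1.symm
    · exact (hφsm.mul stronglyMeasurable_condExp).aestronglyMeasurable
  -- pull out the m-measurable factor
  have hpull : P[Z | m] =ᵐ[P] fun ω => (π (V ω))⁻¹ * (P[G | m]) ω := by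
    have := condExp_mul_of_stronglyMeasurable_left (μ := P) (m := m)
      hηm.stronglyMeasurable (f := fun ω => (π (V ω))⁻¹) (g := G) hZint hgint
    exact this
  have hfz : (fun ω => (R ω / π (V ω)) * g (Y ω, V ω)) = fun ω => fA ω * Z ω := by
    funext ω
    rw [hRA, div_eq_mul_inv, mul_assoc]
  have hfinal : P[fun ω => (R ω / π (V ω)) * g (Y ω, V ω) | m] =ᵐ[P] P[G | m] := by
    calc P[fun ω => (R ω / π (V ω)) * g (Y ω, V ω) | m]
        = P[fun ω => fA ω * Z ω | m] := by rw [hfz]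
      _ =ᵐ[P] fun ω => φ ω * (P[Z | m]) ω := hmain.symm
      _ =ᵐ[P] fun ω => π (V ω) * ((π (V ω))⁻¹ * (P[G | m]) ω) := by
          filter_upwards [hφV, hpull] with ω h1 h2
          rw [h1, h2]
      _ =ᵐ[P] P[G | m] := by
          filter_upwards [hpos] with ω hω
          have hne : π (V ω) ≠ 0 := ne_of_gt (lt_of_lt_of_le hδ0 hω.1)
          rw [mul_inv_cancel_left₀ hne]
  refine ⟨hfinal, ?_⟩
  have hFint' : Integrable (fun ω => (R ω / π (V ω)) * g (Y ω, V ω)) P := by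
    rw [hfz]; exact hFint
  calc ∫ ω, (R ω / π (V ω)) * g (Y ω, V ω) ∂P
      = ∫ ω, (P[fun ω => (R ω / π (V ω)) * g (Y ω, V ω) | m]) ω ∂P :=
        (integral_condExp hm).symm
    _ = ∫ ω, (P[G | m]) ω ∂P := integral_congr_ae hfinal
    _ = ∫ ω, G ω ∂P := integral_condExp hm
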